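/- (Necessary condition for inclusion.) Let F ⊆ D = {−1,+1}^m be a fraction with indicator coefficients b_β = 2^{−m} · Σ_{t ∈ F} (X^β(t) : ℝ), let α_1, …, α_k ∈ Fin m → ZMod 2 be linearly independent over ZMod 2 and e_1, …, e_k ∈ {−1,+1}. If the regular fraction R = {t ∈ D : X^{α_j}(t) = e_j for all j = 1,…,k} is contained in F, then Σ_{S ⊆ {1,…,k}} |b_{Σ_{j ∈ S} α_j}| ≥ 1, where the sum runs over all subsets S of {1,…,k} (the empty set contributing |b_0| = b_0). -/
import Mathlib

open Finset

def Xmon {m : ℕ} (γ : Fin m → ZMod 2) (t : Fin m → ℤˣ) : ℤˣ :=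
  ∏ i ∈ Finset.univ.filter (fun i => γ i = 1), t i

lemma zmod2_cases (x : ZMod 2) : x = 0 ∨ x = 1 := by revert x; decide

lemma Xmon_eq_prod {m : ℕ} (γ : Fin m → ZMod 2) (t : Fin m → ℤˣ) :
    Xmon γ t = ∏ i, if γ i = 1 then t i else 1 := Finset.prod_filter _ _

lemma Xmon_zero {m : ℕ} (t : Fin m → ℤˣ) : Xmon (0 : Fin m → ZMod 2) t = 1 := by
  simp [Xmon_eq_prod, show (0:ZMod 2) ≠ 1 from by decide]

lemma Xmon_add {m : ℕ} (γ δ : Fin m → ZMod 2) (t : Fin m → ℤˣ) :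
    Xmon (γ + δ) t = Xmon γ t * Xmon δ t := by
  simp only [Xmon_eq_prod, ← Finset.prod_mul_distrib]
  refine Finset.prod_congr rfl fun i _ => ?_
  rcases zmod2_cases (γ i) with h1|h1 <;> rcases zmod2_cases (δ i) with h2|h2 <;>
    simp [Pi.add_apply, h1, h2, show (0:ZMod 2) ≠ 1 from by decide,
      show (1+1:ZMod 2) = 0 from by decide, Int.units_mul_self]

lemma Xmon_sum {m k : ℕ} (α : Fin k → Fin m → ZMod 2) (t : Fin m → ℤˣ) (S : Finset (Fin k)) :
    Xmon (∑ j ∈ S, α j) t = ∏ j ∈ S, Xmon (α j) t := by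
  induction S using Finset.cons_induction with
  | empty => simp [Xmon_zero]
  | cons a s ha ih => rw [Finset.sum_cons, Finset.prod_cons, Xmon_add, ih]

lemma Xmon_mul {m : ℕ} (γ : Fin m → ZMod 2) (t t' : Fin m → ℤˣ) :
    Xmon γ (t * t') = Xmon γ t * Xmon γ t' := by
  simp [Xmon, Finset.prod_mul_distrib]

lemma Xmon_char_sum {m : ℕ} (γ : Fin m → ZMod 2) (hγ : γ ≠ 0) :
    ∑ t : Fin m → ℤˣ, ((Xmon γ t : ℤ) : ℝ) = 0 := by
  obtain ⟨i0, hi0⟩ : ∃ i, γ i = 1 := by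
    by_contra h; push_neg at h
    exact hγ (funext fun i => (zmod2_cases (γ i)).resolve_right (h i))
  set u : Fin m → ℤˣ := Function.update (1 : Fin m → ℤˣ) i0 (-1) with hu
  have hXu : Xmon γ u = -1 := by
    rw [Xmon_eq_prod,
      Finset.prod_eq_single i0 (fun j _ hj => by simp [hu, Function.update_of_ne hj]) (by simp)]
    simp [hi0, hu]
  have key : ∑ t : Fin m → ℤˣ, ((Xmon γ (u * t) : ℤ) : ℝ)
      = ∑ t : Fin m → ℤˣ, ((Xmon γ t : ℤ) : ℝ) :=
    Fintype.sum_equiv (Equiv.mulLeft u) _ _ (fun t => rfl)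
  simp only [Xmon_mul, hXu] at key
  push_cast at key
  simp only [neg_mul, one_mul, Finset.sum_neg_distrib] at key
  linarith

lemma sum_alpha_ne_zero {m k : ℕ} (α : Fin k → Fin m → ZMod 2)
    (hα : LinearIndependent (ZMod 2) α) (S : Finset (Fin k)) (hS : S.Nonempty) :
    (∑ j ∈ S, α j) ≠ 0 := by
  intro h0
  have hcomb : ∑ j, (if j ∈ S then (1 : ZMod 2) else 0) • α j = 0 := by
    simp only [ite_smul, one_smul, zero_smul]
    rw [Finset.sum_ite_mem, Finset.univ_inter, h0]
  have := Fintype.linearIndependent_iff.mp hα _ hcomb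
  obtain ⟨j, hj⟩ := hS
  have hj' := this j
  simp [hj] at hj'

/-- Necessary condition for inclusion of a regular fraction: if the regular
fraction `R = {t : X^{α_j}(t) = e_j for all j}` (with `α_1, …, α_k` linearly
independent) is contained in `F`, then
`∑_{S ⊆ {1,…,k}} |b_{∑_{j ∈ S} α_j}| ≥ 1`. -/
theorem regular_subset_necessary (m k : ℕ) (F : Finset (Fin m → ℤˣ))
    (b : (Fin m → ZMod 2) → ℝ)
    (hb : ∀ β, b β = (1 / 2 ^ m : ℝ) * ∑ t ∈ F, ((Xmon β t : ℤ) : ℝ))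
    (α : Fin k → Fin m → ZMod 2) (hα : LinearIndependent (ZMod 2) α)
    (e : Fin k → ℤˣ)
    (hsub : {t : Fin m → ℤˣ | ∀ j, Xmon (α j) t = e j} ⊆ (F : Set (Fin m → ℤˣ))) :
    1 ≤ ∑ S : Finset (Fin k), |b (∑ j ∈ S, α j)| := by
  classical
  set P : (Fin m → ℤˣ) → ℝ :=
    fun t => ∏ j, (((e j : ℤ) : ℝ) * ((Xmon (α j) t : ℤ) : ℝ) + 1) with hP
  have hPexp : ∀ t, P t = ∑ S : Finset (Fin k),
      (∏ j ∈ S, ((e j : ℤ) : ℝ)) * ((Xmon (∑ j ∈ S, α j) t : ℤ) : ℝ) := by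
    intro t
    show ∏ j : Fin k, (((e j : ℤ) : ℝ) * ((Xmon (α j) t : ℤ) : ℝ) + 1) = _
    rw [Finset.prod_add, Finset.powerset_univ]
    refine Finset.sum_congr rfl fun S _ => ?_
    rw [Finset.prod_const_one, mul_one, Finset.prod_mul_distrib]
    congr 1
    rw [Xmon_sum, Units.coe_prod]
    push_cast
    rfl
  have hsum_univ : ∑ t : Fin m → ℤˣ, P t = 2 ^ m := by
    calc ∑ t : Fin m → ℤˣ, P t
        = ∑ t : Fin m → ℤˣ, ∑ S : Finset (Fin k),
            (∏ j ∈ S, ((e j : ℤ) : ℝ)) * ((Xmon (∑ j ∈ S, α j) t : ℤ) : ℝ) :=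
          Finset.sum_congr rfl fun t _ => hPexp t
      _ = ∑ S : Finset (Fin k), (∏ j ∈ S, ((e j : ℤ) : ℝ)) *
            ∑ t : Fin m → ℤˣ, ((Xmon (∑ j ∈ S, α j) t : ℤ) : ℝ) := by
          rw [Finset.sum_comm]
          exact Finset.sum_congr rfl fun S _ => (Finset.mul_sum _ _ _).symm
      _ = 2 ^ m := by
          rw [Finset.sum_eq_single (∅ : Finset (Fin k))]
          · simp [Xmon_zero, Finset.card_univ]
          · intro S _ hS
            rw [Xmon_char_sum _ (sum_alpha_ne_zero α hα S (Finset.nonempty_iff_ne_empty.mpr hS)),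
              mul_zero]
          · intro h; exact absurd (Finset.mem_univ ∅) h
  have hPzero : ∀ t, t ∉ F → P t = 0 := by
    intro t ht
    obtain ⟨j, hj⟩ : ∃ j, Xmon (α j) t ≠ e j := by
      by_contra h; push_neg at h; exact ht (hsub h)
    show ∏ j : Fin k, (((e j : ℤ) : ℝ) * ((Xmon (α j) t : ℤ) : ℝ) + 1) = 0
    refine Finset.prod_eq_zero (Finset.mem_univ j) ?_
    rcases Int.units_eq_one_or (e j) with he|he <;>
      rcases Int.units_eq_one_or (Xmon (α j) t) with hx|hx <;>
      simp [he, hx] at hj ⊢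
  have hFsum : ∑ t ∈ F, P t = 2 ^ m := by
    rw [← hsum_univ]
    exact Finset.sum_subset (Finset.subset_univ F) (fun t _ ht => hPzero t ht)
  have hFb : ∑ t ∈ F, P t
      = 2 ^ m * ∑ S : Finset (Fin k), (∏ j ∈ S, ((e j : ℤ) : ℝ)) * b (∑ j ∈ S, α j) := by
    calc ∑ t ∈ F, P t
        = ∑ S : Finset (Fin k), (∏ j ∈ S, ((e j : ℤ) : ℝ)) *
            ∑ t ∈ F, ((Xmon (∑ j ∈ S, α j) t : ℤ) : ℝ) := by
          rw [Finset.sum_congr rfl fun t _ => hPexp t, Finset.sum_comm]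
          exact Finset.sum_congr rfl fun S _ => (Finset.mul_sum _ _ _).symm
      _ = _ := by
          rw [Finset.mul_sum]
          refine Finset.sum_congr rfl fun S _ => ?_
          rw [hb (∑ j ∈ S, α j)]
          have h2 : (2:ℝ) ^ m ≠ 0 := by positivity
          field_simp
  have habs : ∑ S : Finset (Fin k), (∏ j ∈ S, ((e j : ℤ) : ℝ)) * b (∑ j ∈ S, α j)
      ≤ ∑ S : Finset (Fin k), |b (∑ j ∈ S, α j)| := by
    refine Finset.sum_le_sum fun S _ => ?_
    have h1 : |∏ j ∈ S, ((e j : ℤ) : ℝ)| = 1 := by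
      rw [Finset.abs_prod]
      refine Finset.prod_eq_one fun j _ => ?_
      rcases Int.units_eq_one_or (e j) with he|he <;> simp [he]
    calc (∏ j ∈ S, ((e j : ℤ) : ℝ)) * b (∑ j ∈ S, α j)
        ≤ |(∏ j ∈ S, ((e j : ℤ) : ℝ)) * b (∑ j ∈ S, α j)| := le_abs_self _
      _ = |b (∑ j ∈ S, α j)| := by rw [abs_mul, h1, one_mul]
  have h2m : (0:ℝ) < 2 ^ m := by positivity
  have hX : ∑ S : Finset (Fin k), (∏ j ∈ S, ((e j : ℤ) : ℝ)) * b (∑ j ∈ S, α j) = 1 := by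
    have h := hFsum.symm.trans hFb
    exact (mul_left_cancel₀ (ne_of_gt h2m) (by rw [mul_one]; exact h)).symm
  linarith
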